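/- Let F be a field and let L be a left Leibniz algebra over F with dim_F L = 3 which is not a Lie algebra. Assume ζ(L) = 0, dim_F Leib(L) = 1, and L/Leib(L) is non-abelian. Suppose a1 ∈ L satisfies [a1,a1] = a3 ≠ 0, [a1,a3] = 0, the subspace A = F·a1 ⊕ F·a3 is an ideal of L (i.e., [x,u], [u,x] ∈ A for all x ∈ L, u ∈ A), and there exists b ∈ L with b ∉ A, [b,b] = 0, and [b,a1] ∈ a1 + F·a3. Then the characteristic of F is not 2. -/

import Mathlib

open Module Polynomial

variable {F L : Type*} [Field F] [AddCommGroup L] [Module F L]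

/-- The left Leibniz identity for a bilinear bracket. -/
def IsLeibniz (β : L →ₗ[F] L →ₗ[F] L) : Prop :=
  ∀ a b c : L, β (β a b) c = β a (β b c) - β b (β a c)

/-- The Leibniz kernel `Leib(L)`: the subspace spanned by all squares `[a,a]`. -/
def leibKer (β : L →ₗ[F] L →ₗ[F] L) : Submodule F L :=
  Submodule.span F (Set.range fun a => β a a)

/-- The center `ζ(L)` of a Leibniz algebra. -/
def lzCenter (β : L →ₗ[F] L →ₗ[F] L) : Submodule F L where
  carrier := {x | ∀ y, β x y = 0 ∧ β y x = 0}
  add_mem' := by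
    intro a b ha hb y
    refine ⟨?_, ?_⟩
    · rw [map_add, LinearMap.add_apply, (ha y).1, (hb y).1, add_zero]
    · rw [map_add, (ha y).2, (hb y).2, add_zero]
  zero_mem' := by
    intro y
    refine ⟨?_, ?_⟩ <;> simp
  smul_mem' := by
    intro c a ha y
    refine ⟨?_, ?_⟩
    · rw [map_smul, LinearMap.smul_apply, (ha y).1, smul_zero]
    · rw [map_smul, (ha y).2, smul_zero]

/-- The derived subalgebra `[L,L]`. -/
def leibDerived (β : L →ₗ[F] L →ₗ[F] L) : Submodule F L :=
  Submodule.span F {x | ∃ a b : L, β a b = x}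

/-- The lower central series: `leibGamma β 1 = ⊤`, `leibGamma β (k+1) = [L, leibGamma β k]`. -/
def leibGamma (β : L →ₗ[F] L →ₗ[F] L) : ℕ → Submodule F L
  | 0 => ⊤
  | 1 => ⊤
  | (n+2) => Submodule.span F {x | ∃ a b : L, b ∈ leibGamma β (n+1) ∧ β a b = x}

/-- The derived series: `leibDelta β 0 = ⊤`, `leibDelta β (n+1) = [leibDelta β n, leibDelta β n]`. -/
def leibDelta (β : L →ₗ[F] L →ₗ[F] L) : ℕ → Submodule F L
  | 0 => ⊤
  | (n+1) => Submodule.span F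
      {x | ∃ a ∈ leibDelta β n, ∃ b ∈ leibDelta β n, β a b = x}

/-- Multiplication table predicate: the brackets of the triple `a` are given by `t`. -/
def MulTbl (β : L →ₗ[F] L →ₗ[F] L) (a : Fin 3 → L) (t : Fin 3 → Fin 3 → L) : Prop :=
  ∀ i j, β (a i) (a j) = t i j

theorem stmt15 (β : L →ₗ[F] L →ₗ[F] L) (hLeib : IsLeibniz β)
    (hdim : finrank F L = 3) (hnotLie : ∃ a : L, β a a ≠ 0)
    (hc : lzCenter β = ⊥) (hk : finrank F (leibKer β) = 1)
    (hnab : ∃ a b : L, β a b ∉ leibKer β)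
    (a1 a3 : L) (ha1 : β a1 a1 = a3) (ha3 : a3 ≠ 0) (h13 : β a1 a3 = 0)
    (hideal : ∀ x u : L, u ∈ Submodule.span F ({a1, a3} : Set L) →
      β x u ∈ Submodule.span F ({a1, a3} : Set L) ∧
      β u x ∈ Submodule.span F ({a1, a3} : Set L))
    (b : L) (hbA : b ∉ Submodule.span F ({a1, a3} : Set L)) (hbb : β b b = 0)
    (hba : ∃ α : F, β b a1 = a1 + α • a3) :
    ringChar F ≠ 2 := by
  intro h2
  haveI : CharP F 2 := ringChar.of_eq h2
  have htwo : (2 : F) = 0 := by exact_mod_cast CharP.cast_eq_zero F 2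
  obtain ⟨α, hba⟩ := hba
  -- left multiplication by a3 is zero
  have h3l : ∀ c, β a3 c = 0 := by
    intro c
    have h := hLeib a1 a1 c
    rw [ha1] at h
    simpa using h
  -- β b a3 = a3 + a3 = 0
  have hb3 : β b a3 = 0 := by
    have h := hLeib b a1 a1
    rw [hba, ha1] at h
    simp only [map_add, LinearMap.add_apply, map_smul, LinearMap.smul_apply, ha1, h13, h3l,
      smul_zero, add_zero] at h
    rw [eq_sub_iff_add_eq] at h
    rw [← h, ← two_smul F a3, htwo, zero_smul]
  have ha1ne : a1 ≠ 0 := by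
    intro h
    apply ha3
    rw [← ha1, h, map_zero]
  -- a3 ∉ span {a1}
  have ha1ns : ∀ c : F, c • a1 ≠ a3 := by
    intro c hc'
    have h0 : β a3 a1 = 0 := h3l a1
    rw [← hc', map_smul, LinearMap.smul_apply, ha1] at h0
    rcases smul_eq_zero.mp h0 with hc0 | h30
    · exact ha3 (by rw [← hc', hc0, zero_smul])
    · exact ha3 h30
  -- linear independence of ![b, a1, a3]
  have hli2 : LinearIndependent F ![a1, a3] := by
    rw [LinearIndependent.pair_iff' ha1ne]
    exact ha1ns
  have hbspan : b ∉ Submodule.span F (Set.range ![a1, a3]) := by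
    have hr : Set.range ![a1, a3] = ({a1, a3} : Set L) := by
      ext x
      constructor <;> intro h <;> simp [Matrix.range_cons, Matrix.range_empty] at h ⊢ <;> tauto
    rw [hr]; exact hbA
  have hli3 : LinearIndependent F ![b, a1, a3] :=
    LinearIndependent.fin_cons' b ![a1, a3] hli2 (by
      intro c y hys hy
      by_contra hcne
      apply hbspan
      have hcb : c • b = -(y : L) := eq_neg_of_add_eq_zero_left hy
      have hb' : b = (-c⁻¹) • (y : L) := by
        rw [neg_smul, ← smul_neg, ← hcb, smul_smul, inv_mul_cancel₀ hcne, one_smul]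
      rw [hb']
      exact Submodule.smul_mem _ _ hys)
  haveI : FiniteDimensional F L := FiniteDimensional.of_finrank_pos (by omega)
  have hspan : Submodule.span F (Set.range ![b, a1, a3]) = ⊤ := by
    apply Submodule.eq_top_of_finrank_eq
    rw [finrank_span_eq_card hli3, hdim, Fintype.card_fin]
  have hrange : Set.range ![b, a1, a3] = ({b, a1, a3} : Set L) := by
    ext x
    constructor <;> intro h <;> simp [Matrix.range_cons, Matrix.range_empty] at h ⊢ <;> tauto
  rw [hrange] at hspan
  -- a3 is central
  have hcent : a3 ∈ lzCenter β := by
    intro y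
    refine ⟨h3l y, ?_⟩
    have hy : y ∈ Submodule.span F ({b, a1, a3} : Set L) := hspan ▸ Submodule.mem_top
    have hle : Submodule.span F ({b, a1, a3} : Set L) ≤ LinearMap.ker (β.flip a3) := by
      rw [Submodule.span_le]
      rintro x (rfl | rfl | rfl) <;>
        simp [LinearMap.mem_ker, LinearMap.flip_apply, hb3, h13, h3l]
    exact hle hy
  rw [hc, Submodule.mem_bot] at hcent
  exact ha3 hcent
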